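/- Let $q_0 \in \mathbb{R}$ and $q \in \mathbb{R}^3$ satisfy $q_0^2 + \|q\|^2 = 1$ and $q_0 \neq 0$, let $\Gamma = \tfrac{1}{2}(q_0 I_3 + q^{\times})$, let $M_\omega > 0$ and $P_b \in (0,1)$, and define $\omega_v = -\frac{|q_0| M_\omega}{2\sqrt{3}}\,\Gamma^{-1}\,\big(\mathrm{psat}(q_1), \mathrm{psat}(q_2), \mathrm{psat}(q_3)\big)$. Then $\|\omega_v\| \le M_\omega$. -/

import Mathlib

set_option maxHeartbeats 1000000


open Matrix

/-- The cross-product (skew-symmetric) matrix `q^×` of `q ∈ ℝ³`. -/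
def crossMat (q : EuclideanSpace ℝ (Fin 3)) : Matrix (Fin 3) (Fin 3) ℝ :=
  !![0, -q 2, q 1; q 2, 0, -q 0; -q 1, q 0, 0]

/-- The piecewise saturation function `psat` of the paper, with parameter `Pb ∈ (0,1)`,
segment coefficients `a_p = 1/(Pb² - 1)` and `K_m = -a_p (Pb - 1)²/Pb`. -/
noncomputable def psat (Pb x : ℝ) : ℝ :=
  if x < -Pb then -(1 / (Pb ^ 2 - 1)) * (x + 1) ^ 2 - 1
  else if x ≤ Pb then (-(1 / (Pb ^ 2 - 1)) * (Pb - 1) ^ 2 / Pb) * x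
  else (1 / (Pb ^ 2 - 1)) * (x - 1) ^ 2 + 1

lemma psat_abs_le (Pb x : ℝ) (h0 : 0 < Pb) (h1 : Pb < 1) (hx1 : -1 ≤ x) (hx2 : x ≤ 1) :
    |psat Pb x| ≤ 1 := by
  have hP2 : Pb ^ 2 - 1 < 0 := by nlinarith
  have hAneg : (1 / (Pb ^ 2 - 1)) < 0 := div_neg_of_pos_of_neg one_pos hP2
  have hA : (1 / (Pb ^ 2 - 1)) * (Pb ^ 2 - 1) = 1 := div_mul_cancel₀ 1 (ne_of_lt hP2)
  rw [abs_le, psat]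
  split_ifs with h h'
  · constructor
    · nlinarith [sq_nonneg (x+1)]
    · nlinarith [sq_nonneg (x+1), mul_nonneg (neg_nonneg.2 hAneg.le) (sq_nonneg (x+1)),
        mul_le_mul_of_nonneg_left (show (x+1)^2 ≤ (1-Pb)^2 by nlinarith) (neg_nonneg.2 hAneg.le)]
  · have hK : (-(1 / (Pb ^ 2 - 1)) * (Pb - 1) ^ 2 / Pb) * Pb = -(1 / (Pb ^ 2 - 1)) * (Pb - 1) ^ 2 :=
      div_mul_cancel₀ _ h0.ne'
    have hK0 : 0 ≤ -(1 / (Pb ^ 2 - 1)) * (Pb - 1) ^ 2 / Pb :=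
      div_nonneg (mul_nonneg (neg_nonneg.2 hAneg.le) (sq_nonneg _)) h0.le
    constructor
    · nlinarith [mul_le_mul_of_nonneg_left (show -Pb ≤ x from not_lt.1 h) hK0]
    · nlinarith [mul_le_mul_of_nonneg_left h' hK0]
  · constructor
    · nlinarith [sq_nonneg (x-1),
        mul_le_mul_of_nonneg_left (show (x-1)^2 ≤ (1-Pb)^2 by nlinarith) (neg_nonneg.2 hAneg.le)]
    · nlinarith [mul_nonneg (neg_nonneg.2 hAneg.le) (sq_nonneg (x-1))]

lemma key_ineq (a b c d w0 w1 w2 : ℝ) :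
    a^2*(w0^2+w1^2+w2^2) ≤ (a*w0-d*w1+c*w2)^2+(d*w0+a*w1-b*w2)^2+(-(c*w0)+b*w1+a*w2)^2 := by
  nlinarith [sq_nonneg (b*w1-c*w0), sq_nonneg (b*w2-d*w0), sq_nonneg (c*w2-d*w1)]

/-- Remark 1 of the paper: the virtual control law
`ω_v = -(|q₀| M_ω/(2√3)) Γ⁻¹ psat(q)` satisfies `‖ω_v‖ ≤ M_ω`. -/
theorem virtual_control_norm_bound (q0 : ℝ) (q : EuclideanSpace ℝ (Fin 3))
    (hunit : q0 ^ 2 + ‖q‖ ^ 2 = 1) (hq0 : q0 ≠ 0)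
    (Γ : Matrix (Fin 3) (Fin 3) ℝ)
    (hΓ : Γ = (1 / 2 : ℝ) • (q0 • (1 : Matrix (Fin 3) (Fin 3) ℝ) + crossMat q))
    (Mω Pb : ℝ) (hMω : 0 < Mω) (hPb : Pb ∈ Set.Ioo (0 : ℝ) 1)
    (ωv : EuclideanSpace ℝ (Fin 3))
    (hωv : ωv = (-(|q0| * Mω / (2 * Real.sqrt 3))) •
        Matrix.toEuclideanCLM (𝕜 := ℝ) Γ⁻¹
          ((WithLp.equiv 2 (Fin 3 → ℝ)).symm (fun i => psat Pb (q i)))) :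
    ‖ωv‖ ≤ Mω := by
  obtain ⟨hPb0, hPb1⟩ := hPb
  have hqn : ‖q‖^2 = (q 0)^2+(q 1)^2+(q 2)^2 := by
    rw [EuclideanSpace.norm_eq, Real.sq_sqrt (by positivity)]
    simp [Fin.sum_univ_three, sq_abs]
  have hunit' : q0^2 + ((q 0)^2+(q 1)^2+(q 2)^2) = 1 := by rw [← hqn]; exact hunit
  -- bounds on components of q
  have hq0sq : 0 < q0^2 := by positivity
  have hsq1 : ∀ i : Fin 3, (q i)^2 ≤ 1 := by
    intro i
    have h01 : (q i)^2 ≤ (q 0)^2+(q 1)^2+(q 2)^2 := by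
      match i with
      | 0 => nlinarith [sq_nonneg (q 1), sq_nonneg (q 2)]
      | 1 => nlinarith [sq_nonneg (q 0), sq_nonneg (q 2)]
      | 2 => nlinarith [sq_nonneg (q 0), sq_nonneg (q 1)]
    nlinarith
  have hqi : ∀ i : Fin 3, -1 ≤ q i ∧ q i ≤ 1 := by
    intro i
    constructor <;> nlinarith [hsq1 i]
  set v : Fin 3 → ℝ := fun i => psat Pb (q i) with hv
  have hvi : ∀ i : Fin 3, |v i| ≤ 1 := fun i =>
    psat_abs_le Pb (q i) hPb0 hPb1 (hqi i).1 (hqi i).2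
  have hvsq : ∀ i : Fin 3, (v i)^2 ≤ 1 := by
    intro i
    have := hvi i
    nlinarith [abs_nonneg (v i), sq_abs (v i)]
  -- determinant of Γ
  have hdet : Γ.det = q0/8 := by
    have : Γ.det = (q0^3 + q0*((q 0)^2+(q 1)^2+(q 2)^2))/8 := by
      simp [hΓ, crossMat, Matrix.det_fin_three, Matrix.smul_apply, Matrix.add_apply,
        Matrix.one_apply]
      ring
    rw [this]; linear_combination (q0/8) * hunit'
  have hGinv : Γ * Γ⁻¹ = 1 := by
    apply Matrix.mul_nonsing_inv
    rw [hdet]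
    exact isUnit_iff_ne_zero.2 (by positivity)
  set w : Fin 3 → ℝ := Γ⁻¹ *ᵥ v with hw
  have hvw : Γ *ᵥ w = v := by
    rw [hw, Matrix.mulVec_mulVec, hGinv, Matrix.one_mulVec]
  -- component equations
  have e0 : v 0 = (1/2)*(q0 * w 0 - q 2 * w 1 + q 1 * w 2) := by
    rw [← hvw]
    simp [hΓ, crossMat, Matrix.mulVec, dotProduct, Fin.sum_univ_three,
      Matrix.smul_apply, Matrix.add_apply, Matrix.one_apply]
    ring
  have e1 : v 1 = (1/2)*(q 2 * w 0 + q0 * w 1 - q 0 * w 2) := by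
    rw [← hvw]
    simp [hΓ, crossMat, Matrix.mulVec, dotProduct, Fin.sum_univ_three,
      Matrix.smul_apply, Matrix.add_apply, Matrix.one_apply]
    ring
  have e2 : v 2 = (1/2)*(-(q 1 * w 0) + q 0 * w 1 + q0 * w 2) := by
    rw [← hvw]
    simp [hΓ, crossMat, Matrix.mulVec, dotProduct, Fin.sum_univ_three,
      Matrix.smul_apply, Matrix.add_apply, Matrix.one_apply]
    ring
  -- key inequality: q0² ‖w‖² ≤ 4 ‖v‖² ≤ 12
  have hkey : q0^2 * ((w 0)^2 + (w 1)^2 + (w 2)^2) ≤ 12 := by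
    have h4 := key_ineq q0 (q 0) (q 1) (q 2) (w 0) (w 1) (w 2)
    have E0 : (q0 * w 0 - q 2 * w 1 + q 1 * w 2)^2 = 4 * (v 0)^2 := by rw [e0]; ring
    have E1 : (q 2 * w 0 + q0 * w 1 - q 0 * w 2)^2 = 4 * (v 1)^2 := by rw [e1]; ring
    have E2 : (-(q 1 * w 0) + q 0 * w 1 + q0 * w 2)^2 = 4 * (v 2)^2 := by rw [e2]; ring
    linarith [h4, E0 ▸ h4, hvsq 0, hvsq 1, hvsq 2, E0, E1, E2]
  -- components of ωv
  have hωvi : ∀ i : Fin 3, ωv i = (-(|q0| * Mω / (2 * Real.sqrt 3))) * w i := by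
    intro i
    simp [hωv, WithLp.equiv_symm_apply, Matrix.toEuclideanCLM_toLp, hw]
  -- squared norm of ωv
  have hs3 : Real.sqrt 3 ^ 2 = 3 := Real.sq_sqrt (by norm_num)
  have hs3pos : 0 < Real.sqrt 3 := Real.sqrt_pos.2 (by norm_num)
  have hnorm2 : ‖ωv‖^2 = (q0^2 * Mω^2 / 12) * ((w 0)^2 + (w 1)^2 + (w 2)^2) := by
    rw [EuclideanSpace.norm_eq, Real.sq_sqrt (by positivity)]
    simp only [Fin.sum_univ_three, Real.norm_eq_abs, sq_abs, hωvi]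
    have : (-(|q0| * Mω / (2 * Real.sqrt 3)))^2 = q0^2 * Mω^2 / 12 := by
      rw [neg_pow, div_pow, mul_pow, mul_pow, sq_abs, hs3]
      ring
    rw [mul_pow, mul_pow, mul_pow, this]
    ring
  have hle : ‖ωv‖^2 ≤ Mω^2 := by
    rw [hnorm2]
    nlinarith [hkey, sq_nonneg Mω, mul_nonneg (sq_nonneg Mω)
      (add_nonneg (add_nonneg (sq_nonneg (w 0)) (sq_nonneg (w 1))) (sq_nonneg (w 2)))]
  nlinarith [norm_nonneg ωv, hle, hMω]
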